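/- If R_n(a,r) is bipartite with n, a even and r odd, then the sets V_1 = {u_i, v_{i+1} : i even} and V_2 = {u_i, v_{i+1} : i odd} form a bipartition of R_n(a,r). -/

import Mathlib

open SimpleGraph

/-- The Rose Window graph `R_n(a,r)`. Vertices `Sum.inl i = uᵢ`, `Sum.inr i = vᵢ`. -/
def roseWindow (n : ℕ) (a r : ZMod n) : SimpleGraph (ZMod n ⊕ ZMod n) :=
  SimpleGraph.fromRel (fun x y =>
    match x, y with
    | Sum.inl i, Sum.inl i' => i' = i + 1
    | Sum.inr i, Sum.inr i' => i' = i + r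
    | Sum.inl i', Sum.inr i => i' = i ∨ i' = i + a
    | _, _ => False)

/-- The canonical double cover of a graph. -/
def cdc {V : Type*} (G : SimpleGraph V) : SimpleGraph (V × ZMod 2) where
  Adj x y := G.Adj x.1 y.1 ∧ x.2 ≠ y.2
  symm := ⟨fun x y h => ⟨h.1.symm, h.2.symm⟩⟩
  loopless := ⟨fun x h => h.2 rfl⟩

/-- The automorphism group of a graph, as a subgroup of the permutations of vertices. -/
def autSubgroup {V : Type*} (G : SimpleGraph V) : Subgroup (Equiv.Perm V) where
  carrier := {σ | ∀ x y, G.Adj (σ x) (σ y) ↔ G.Adj x y}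
  one_mem' := by intro x y; rfl
  mul_mem' := by
    intro σ τ hσ hτ x y
    simpa [Equiv.Perm.mul_apply] using (hσ (τ x) (τ y)).trans (hτ x y)
  inv_mem' := by
    intro σ hσ x y
    conv_rhs => rw [← (σ.apply_symm_apply x : σ (σ⁻¹ x) = x), ← (σ.apply_symm_apply y : σ (σ⁻¹ y) = y)]
    exact (hσ (σ⁻¹ x) (σ⁻¹ y)).symm

/-- if `n, a` are even and `r` is odd, then
`V₁ = {uᵢ, vᵢ₊₁ : i even}` and `V₂ = {uᵢ, vᵢ₊₁ : i odd}` form a bipartition of `R_n(a,r)`. -/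
theorem roseWindow_bipartition (n a r : ℕ) (hn : 3 ≤ n) (hne : Even n) (hae : Even a)
    (hro : Odd r) (ha : (a : ZMod n) ≠ 0) (hr : (r : ZMod n) ≠ 0) :
    let V1 : Set (ZMod n ⊕ ZMod n) :=
      {x | Sum.elim (fun i => Even (ZMod.val i)) (fun i => Odd (ZMod.val i)) x}
    let V2 : Set (ZMod n ⊕ ZMod n) :=
      {x | Sum.elim (fun i => Odd (ZMod.val i)) (fun i => Even (ZMod.val i)) x}
    V1 ∩ V2 = ∅ ∧ V1 ∪ V2 = Set.univ ∧
    ∀ x y, (roseWindow n a r).Adj x y →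
      (x ∈ V1 ∧ y ∈ V2) ∨ (x ∈ V2 ∧ y ∈ V1) := by
  haveI : NeZero n := ⟨by omega⟩
  intro V1 V2
  have hmod : ∀ m : ℕ, Even (m % n) ↔ Even m := by
    intro m
    conv_rhs => rw [← Nat.div_add_mod m n]
    rw [Nat.even_add]
    simp [hne.mul_right (m / n)]
  have hadd : ∀ x y : ZMod n, (Even (x + y).val ↔ (Even x.val ↔ Even y.val)) := by
    intro x y
    rw [ZMod.val_add, hmod, Nat.even_add]
  have h1 : ¬ Even (1 : ZMod n).val := by
    rw [show (1 : ZMod n) = ((1 : ℕ) : ZMod n) by norm_num, ZMod.val_natCast,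
      Nat.mod_eq_of_lt (by omega)]
    decide
  have hrv : ¬ Even ((r : ZMod n)).val := by
    rw [ZMod.val_natCast, hmod]
    exact (Nat.not_even_iff_odd).mpr hro
  have hav : Even ((a : ZMod n)).val := by
    rw [ZMod.val_natCast, hmod]; exact hae
  refine ⟨?_, ?_, ?_⟩
  · ext x
    rcases x with i | i <;>
      simp only [V1, V2, Set.mem_inter_iff, Set.mem_setOf_eq, Sum.elim_inl, Sum.elim_inr,
        Set.mem_empty_iff_false, iff_false, Nat.even_iff, Nat.odd_iff, not_and] <;> omega
  · ext x
    rcases x with i | i <;>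
      simp only [V1, V2, Set.mem_union, Set.mem_setOf_eq, Sum.elim_inl, Sum.elim_inr,
        Set.mem_univ, iff_true, Nat.even_iff, Nat.odd_iff] <;> omega
  · intro x y hxy
    rw [roseWindow, fromRel_adj] at hxy
    obtain ⟨-, h⟩ := hxy
    rcases x with i | i <;> rcases y with j | j <;>
      simp only [V1, V2, Set.mem_setOf_eq, Sum.elim_inl, Sum.elim_inr,
        ← Nat.not_even_iff_odd]
    · rcases h with h | h <;> subst h
      · have := hadd i 1; tauto
      · have := hadd j 1; tauto
    · rcases h with (h | h) | h
      · subst h; tauto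
      · subst h; have := hadd j (a : ZMod n); tauto
      · exact absurd h not_false
    · rcases h with h | (h | h)
      · exact absurd h not_false
      · subst h; tauto
      · subst h; have := hadd i (a : ZMod n); tauto
    · rcases h with h | h <;> subst h
      · have := hadd i (r : ZMod n); tauto
      · have := hadd j (r : ZMod n); tauto
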